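/- For every permutation p of {1,…,n}, the first entry p_1 does not have two children in the minmax tree T^m_p. -/

import Mathlib

/-- Binary trees with natural-number labels, used to model minmax trees of
permutations. -/
inductive BTree where
  | nil : BTree
  | node : ℕ → BTree → BTree → BTree
deriving DecidableEq, Repr

namespace BTree

/-- The label of the root (if any). -/
def rootVal : BTree → Option ℕ
  | .nil => none
  | .node v _ _ => some v

/-- Whether the value `x` occurs as a label in the tree. -/
def memB : BTree → ℕ → Bool
  | .nil, _ => false
  | .node v l r, x => (x == v) || memB l x || memB r x

/-- The number of children of the (unique, for permutations) node labelled `x`. -/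
def numChildren : BTree → ℕ → ℕ
  | .nil, _ => 0
  | .node v l r, x =>
      if x = v then (if l = .nil then 0 else 1) + (if r = .nil then 0 else 1)
      else numChildren l x + numChildren r x

/-- `x` is a leaf of the tree: it occurs in the tree and has no children. -/
def IsLeaf (t : BTree) (x : ℕ) : Prop := t.memB x = true ∧ t.numChildren x = 0

instance (t : BTree) (x : ℕ) : Decidable (t.IsLeaf x) := by unfold IsLeaf; infer_instance

/-- `childB t x y = true` iff `x` is a child of `y` in `t`, i.e. `x` is the root of
the left or the right subtree hanging from `y`. -/
def childB : BTree → ℕ → ℕ → Bool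
  | .nil, _, _ => false
  | .node v l r, x, y =>
      ((y == v) && (l.rootVal == some x || r.rootVal == some x))
      || childB l x y || childB r x y

/-- `ancB t x y = true` iff `x` is a (strict) ancestor of `y` in `t`, i.e. `y` lies
in a subtree hanging from `x`. -/
def ancB : BTree → ℕ → ℕ → Bool
  | .nil, _, _ => false
  | .node v l r, x, y =>
      ((x == v) && (memB l y || memB r y)) || ancB l x y || ancB r x y

end BTree

/-- `x` is the leftmost-eligible extreme letter of `l`: the minimum or the maximum. -/
def isExtreme (l : List ℕ) (x : ℕ) : Bool :=
  (l.min? == some x) || (l.max? == some x)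

/-- Fuelled construction of the minmax tree of a list of distinct naturals:
split the list as `u ++ [m] ++ v` where `m` is the leftmost of the minimum and
maximum letters, put `m` at the root and recurse on `u` (left) and `v` (right). -/
def mmAux : ℕ → List ℕ → BTree
  | 0, _ => .nil
  | fuel+1, l =>
    if l.isEmpty then .nil
    else
      let k := l.findIdx (isExtreme l)
      .node (l.getD k 0) (mmAux fuel (l.take k)) (mmAux fuel (l.drop (k+1)))

/-- The minmax tree `T^m_p` of a word `l` (with distinct letters). -/
def minmaxTree (l : List ℕ) : BTree := mmAux l.length l

/-- The word `p_1 p_2 … p_n` on the letters `{1,…,n}` associated to a permutation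
`p` of `Fin n`. -/
def permList (n : ℕ) (p : Equiv.Perm (Fin n)) : List ℕ :=
  List.ofFn (fun i => (p i : ℕ) + 1)

/-- The `i`-th entry `p_i` (1-indexed) of the permutation `p`. -/
def entryAt (n : ℕ) (p : Equiv.Perm (Fin n)) (i : ℕ) : ℕ :=
  (permList n p).getD (i - 1) 0


lemma mmAux_nil (f : ℕ) : mmAux f [] = .nil := by
  cases f <;> simp [mmAux]

lemma numChildren_eq_zero_of_not_mem (t : BTree) (x : ℕ) (h : ¬ t.memB x = true) :
    t.numChildren x = 0 := by
  induction t with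
  | nil => rfl
  | node v l r ihl ihr =>
    simp [BTree.memB] at h
    obtain ⟨⟨h1, h2⟩, h3⟩ := h
    simp [BTree.numChildren, h1, ihl (by simp [h2]), ihr (by simp [h3])]

lemma findIdx_lt (l : List ℕ) (hl : l ≠ []) : l.findIdx (isExtreme l) < l.length := by
  obtain ⟨m, hm⟩ : ∃ m, l.min? = some m := by
    cases h : l.min? with
    | none => exact absurd (List.min?_eq_none_iff.mp h) hl
    | some m => exact ⟨m, rfl⟩
  have hmem : m ∈ l := List.min?_mem hm
  exact List.findIdx_lt_length_of_exists ⟨m, hmem, by simp [isExtreme, hm]⟩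

lemma mem_of_memB_mmAux : ∀ (f : ℕ) (l : List ℕ) (x : ℕ),
    (mmAux f l).memB x = true → x ∈ l := by
  intro f
  induction f with
  | zero => intro l x h; simp [mmAux, BTree.memB] at h
  | succ f ih =>
    intro l x h
    by_cases hl : l = []
    · simp [hl, mmAux, BTree.memB] at h
    · rw [mmAux] at h
      simp only [List.isEmpty_eq_false_iff_exists_mem, List.isEmpty_iff, hl, if_false] at h
      simp only [BTree.memB, Bool.or_eq_true, beq_iff_eq] at h
      rcases h with (h | h) | h
      · subst h
        have hk := findIdx_lt l hl
        rw [List.getD_eq_getElem _ _ hk]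
        exact List.getElem_mem hk
      · exact List.take_subset _ _ (ih _ _ h)
      · exact List.drop_subset _ _ (ih _ _ h)

lemma node_nil_le (v : ℕ) (r : BTree) : (BTree.node v .nil r).numChildren v ≤ 1 := by
  simp [BTree.numChildren]
  split <;> omega

lemma numChildren_head_le_one : ∀ (f : ℕ) (x : ℕ) (rest : List ℕ),
    (x :: rest).Nodup → (mmAux f (x :: rest)).numChildren x ≤ 1 := by
  intro f
  induction f with
  | zero => intro x rest _; simp [mmAux, BTree.numChildren]
  | succ f ih =>
    intro x rest hnd
    set l := x :: rest with hldef
    have hl : l ≠ [] := by simp [hldef]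
    rw [mmAux]
    simp only [List.isEmpty_iff, hl, if_false]
    set k := l.findIdx (isExtreme l) with hkdef
    clear_value k
    have hk : k < l.length := by rw [hkdef]; exact findIdx_lt l hl
    rcases Nat.eq_zero_or_pos k with hk0 | hkpos
    · subst hk0
      simp only [List.take_zero, mmAux_nil]
      have hget : l.getD 0 0 = x := by simp [hldef]
      rw [hget]
      exact node_nil_le x _
    · have hget : l.getD k 0 = l[k] := List.getD_eq_getElem _ _ hk
      have hne : l[k] ≠ x := by
        intro hkx
        have : l[k] = l[0] := by simpa [hldef] using hkx
        have := hnd.getElem_inj_iff.mp this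
        omega
      rw [hget]
      simp only [BTree.numChildren, if_neg (Ne.symm hne)]
      have htake : l.take k = x :: rest.take (k - 1) := by
        obtain ⟨k', hkk⟩ : ∃ k', k = k' + 1 := ⟨k - 1, by omega⟩
        rw [hkk]; simp [hldef]
      have hndt : (x :: rest.take (k - 1)).Nodup := by
        rw [← htake]; exact (List.take_sublist _ _).nodup hnd
      have hleft : (mmAux f (l.take k)).numChildren x ≤ 1 := by
        rw [htake]; exact ih _ _ hndt
      have hright : (mmAux f (l.drop (k + 1))).numChildren x = 0 := by
        apply numChildren_eq_zero_of_not_mem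
        intro hmem
        have hxmem := mem_of_memB_mmAux _ _ _ hmem
        have : x ∈ rest := by
          have : l.drop (k + 1) = rest.drop k := by simp [hldef]
          rw [this] at hxmem
          exact List.drop_subset _ _ hxmem
        exact (List.nodup_cons.mp hnd).1 this
      omega

/-- For every permutation `p` of `{1,…,n}`, the first entry `p_1`
does not have two children in the minmax tree. -/
theorem first_entry_not_two_children (n : ℕ) (p : Equiv.Perm (Fin n)) :
    (minmaxTree (permList n p)).numChildren (entryAt n p 1) ≠ 2 := by
  have hnd : (permList n p).Nodup := by
    rw [permList, List.nodup_ofFn]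
    intro a b hab
    have hv : ((p a : ℕ)) = p b := by simpa using hab
    exact p.injective (Fin.val_injective hv)
  cases hpl : permList n p with
  | nil => simp [minmaxTree, hpl, mmAux_nil, BTree.numChildren]
  | cons x rest =>
    have hx : entryAt n p 1 = x := by simp [entryAt, hpl]
    simp only [hx, minmaxTree, hpl]
    have := numChildren_head_le_one (x :: rest).length x rest (by rwa [hpl] at hnd)
    omega
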